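/- (i) For every r ≥ 3, the elementary abelian group (ZMod 2)^r admits a weight w such that no weight 𝒫-equivalent to w is gapless. (ii) For every nontrivial finite group G and every r ≥ 2, the group G × (ZMod 2)^r admits a weight w such that no weight 𝒫-equivalent to w is gapless. -/
import Mathlib


/-- A weight on a group `G`: vanishes exactly at the identity, is symmetric
under inversion, and satisfies the triangle inequality. -/
def IsWeight {G : Type*} [Group G] (w : G → ℕ) : Prop :=
  (∀ x, w x = 0 ↔ x = 1) ∧ (∀ x, w x⁻¹ = w x) ∧ ∀ x y, w (x * y) ≤ w x + w y

/-- A weight is gapless if its set of values is an initial segment of `ℕ`. -/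
def Gapless {G : Type*} (w : G → ℕ) : Prop :=
  ∀ g : G, ∀ m : ℕ, m ≤ w g → ∃ h : G, w h = m

/-- Two weights are `𝒫`-equivalent if they induce the same partition of `G`
into level sets. -/
def PEquivW {G : Type*} (w w' : G → ℕ) : Prop :=
  ∀ g h : G, w g = w h ↔ w' g = w' h

/-- `G` admits an invariant metric that is not `𝒫`-interval. -/
def HasNonPIntervalWeight (G : Type*) [Group G] : Prop :=
  ∃ w : G → ℕ, IsWeight w ∧
    ∀ w' : G → ℕ, IsWeight w' → PEquivW w w' → ¬ Gapless w'

/-- (i) For `r ≥ 3` the elementary abelian group `(ℤ/2)^r`, and (ii) for any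
nontrivial finite group `G` and `r ≥ 2` the group `G × (ℤ/2)^r`, admit weights
no `𝒫`-equivalent weight of which is gapless. -/
private lemma mzInv : ∀ m : Multiplicative (ZMod 2), m⁻¹ = m := by decide
private lemma mzA : (Multiplicative.ofAdd (1 : ZMod 2)) ≠ 1 := by decide

private def wI (r : ℕ) (h3 : 3 ≤ r) (x : Fin r → Multiplicative (ZMod 2)) : ℕ :=
  if x = 1 then 0
  else if x ⟨0, by omega⟩ = 1 then
    if x ⟨1, by omega⟩ = 1 then (if x ⟨2, by omega⟩ = 1 then 4 else 7)
    else (if x ⟨2, by omega⟩ = 1 then 6 else 4)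
  else if x ⟨1, by omega⟩ = 1 then
    (if x ⟨2, by omega⟩ = 1 then 7 else 6)
  else (if x ⟨2, by omega⟩ = 1 then 5 else 4)

private def eI (r : ℕ) (h3 : 3 ≤ r) (b0 b1 b2 : Bool) : Fin r → Multiplicative (ZMod 2) :=
  fun i =>
    if i = ⟨0, by omega⟩ then (if b0 then Multiplicative.ofAdd 1 else 1)
    else if i = ⟨1, by omega⟩ then (if b1 then Multiplicative.ofAdd 1 else 1)
    else if i = ⟨2, by omega⟩ then (if b2 then Multiplicative.ofAdd 1 else 1)
    else 1

private lemma eI_app0 {r : ℕ} (h3 : 3 ≤ r) (b0 b1 b2 : Bool) :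
    eI r h3 b0 b1 b2 ⟨0, by omega⟩ = (if b0 then Multiplicative.ofAdd 1 else 1) := by
  simp [eI]

private lemma eI_app1 {r : ℕ} (h3 : 3 ≤ r) (b0 b1 b2 : Bool) :
    eI r h3 b0 b1 b2 ⟨1, by omega⟩ = (if b1 then Multiplicative.ofAdd 1 else 1) := by
  simp [eI, Fin.mk.injEq]

private lemma eI_app2 {r : ℕ} (h3 : 3 ≤ r) (b0 b1 b2 : Bool) :
    eI r h3 b0 b1 b2 ⟨2, by omega⟩ = (if b2 then Multiplicative.ofAdd 1 else 1) := by
  simp [eI, Fin.mk.injEq]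

private lemma eI_ne_one {r : ℕ} (h3 : 3 ≤ r) {b0 b1 b2 : Bool}
    (hb : b0 = true ∨ b1 = true ∨ b2 = true) : eI r h3 b0 b1 b2 ≠ 1 := by
  intro h
  rcases hb with hb | hb | hb
  · have := congrFun h ⟨0, by omega⟩
    rw [eI_app0, hb] at this
    simp at this
  · have := congrFun h ⟨1, by omega⟩
    rw [eI_app1, hb] at this
    simp at this
  · have := congrFun h ⟨2, by omega⟩
    rw [eI_app2, hb] at this
    simp at this

private lemma mz_mul (b c : Bool) :
    (if b then Multiplicative.ofAdd (1 : ZMod 2) else 1) *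
      (if c then Multiplicative.ofAdd (1 : ZMod 2) else 1) =
    (if xor b c then Multiplicative.ofAdd (1 : ZMod 2) else 1) := by
  cases b <;> cases c <;> decide

private lemma eI_mul {r : ℕ} (h3 : 3 ≤ r) (b0 b1 b2 c0 c1 c2 : Bool) :
    eI r h3 b0 b1 b2 * eI r h3 c0 c1 c2 = eI r h3 (xor b0 c0) (xor b1 c1) (xor b2 c2) := by
  funext i
  simp only [Pi.mul_apply, eI]
  by_cases h0 : i = (⟨0, by omega⟩ : Fin r)
  · simp only [if_pos h0]; exact mz_mul b0 c0
  · by_cases h1 : i = (⟨1, by omega⟩ : Fin r)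
    · simp only [if_neg h0, if_pos h1]; exact mz_mul b1 c1
    · by_cases h2 : i = (⟨2, by omega⟩ : Fin r)
      · simp only [if_neg h0, if_neg h1, if_pos h2]; exact mz_mul b2 c2
      · simp only [if_neg h0, if_neg h1, if_neg h2, one_mul]

private def tblI : Bool → Bool → Bool → ℕ
  | true, true, true => 4
  | false, true, true => 4
  | true, true, false => 5
  | true, false, true => 6
  | false, true, false => 6
  | true, false, false => 7
  | false, false, true => 7
  | false, false, false => 4

private lemma wI_eI {r : ℕ} (h3 : 3 ≤ r) {b0 b1 b2 : Bool}
    (hb : b0 = true ∨ b1 = true ∨ b2 = true) :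
    wI r h3 (eI r h3 b0 b1 b2) = tblI b0 b1 b2 := by
  simp only [wI]
  rw [if_neg (eI_ne_one h3 hb)]
  cases b0 <;> cases b1 <;> cases b2 <;>
    simp [eI_app0, eI_app1, eI_app2, mzA, tblI]

private lemma wI_zero_iff {r : ℕ} (h3 : 3 ≤ r) (x : Fin r → Multiplicative (ZMod 2)) :
    wI r h3 x = 0 ↔ x = 1 := by
  constructor
  · intro h0
    by_contra hx
    simp only [wI, if_neg hx] at h0
    split_ifs at h0 <;> omega
  · intro h; subst h; simp [wI]

private lemma wI_range {r : ℕ} (h3 : 3 ≤ r) (x : Fin r → Multiplicative (ZMod 2)) :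
    wI r h3 x = 0 ∨ (4 ≤ wI r h3 x ∧ wI r h3 x ≤ 7) := by
  simp only [wI]; split_ifs <;> omega

private lemma wI_vals {r : ℕ} (h3 : 3 ≤ r) (x : Fin r → Multiplicative (ZMod 2)) :
    wI r h3 x = 0 ∨ wI r h3 x = 4 ∨ wI r h3 x = 5 ∨ wI r h3 x = 6 ∨ wI r h3 x = 7 := by
  simp only [wI]; split_ifs <;> omega

private lemma caseI (r : ℕ) (h3 : 3 ≤ r) :
    HasNonPIntervalWeight (Fin r → Multiplicative (ZMod 2)) := by
  refine ⟨wI r h3, ⟨wI_zero_iff h3, ?_, ?_⟩, ?_⟩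
  · intro x
    have hx : x⁻¹ = x := funext fun i => by rw [Pi.inv_apply, mzInv]
    rw [hx]
  · intro x y
    by_cases hx : x = 1
    · subst hx; rw [one_mul]; have h1 : wI r h3 1 = 0 := (wI_zero_iff h3 1).mpr rfl; omega
    by_cases hy : y = 1
    · subst hy; rw [mul_one]; have h1 : wI r h3 1 = 0 := (wI_zero_iff h3 1).mpr rfl; omega
    have hx0 : wI r h3 x ≠ 0 := fun h => hx ((wI_zero_iff h3 x).mp h)
    have hy0 : wI r h3 y ≠ 0 := fun h => hy ((wI_zero_iff h3 y).mp h)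
    have r1 := wI_range h3 x
    have r2 := wI_range h3 y
    have r3 := wI_range h3 (x * y)
    omega
  intro w' hw' hpe hgl
  obtain ⟨hw0, hwinv, hwtri⟩ := hw'

  have wv111 : wI r h3 (eI r h3 true true true) = 4 := by rw [wI_eI h3 (by simp)]; rfl
  have wv011 : wI r h3 (eI r h3 false true true) = 4 := by rw [wI_eI h3 (by simp)]; rfl
  have wv110 : wI r h3 (eI r h3 true true false) = 5 := by rw [wI_eI h3 (by simp)]; rfl
  have wv101 : wI r h3 (eI r h3 true false true) = 6 := by rw [wI_eI h3 (by simp)]; rfl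
  have wv010 : wI r h3 (eI r h3 false true false) = 6 := by rw [wI_eI h3 (by simp)]; rfl
  have wv100 : wI r h3 (eI r h3 true false false) = 7 := by rw [wI_eI h3 (by simp)]; rfl
  have wv001 : wI r h3 (eI r h3 false false true) = 7 := by rw [wI_eI h3 (by simp)]; rfl
  have qe011 : w' (eI r h3 false true true) = w' (eI r h3 true true true) := (hpe _ _).mp (by rw [wv011, wv111])
  have qe010 : w' (eI r h3 false true false) = w' (eI r h3 true false true) := (hpe _ _).mp (by rw [wv010, wv101])
  have qe001 : w' (eI r h3 false false true) = w' (eI r h3 true false false) := (hpe _ _).mp (by rw [wv001, wv100])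
  have pos111 : w' (eI r h3 true true true) ≠ 0 := fun h => eI_ne_one h3 (by simp) ((hw0 _).mp h)
  have pos110 : w' (eI r h3 true true false) ≠ 0 := fun h => eI_ne_one h3 (by simp) ((hw0 _).mp h)
  have pos101 : w' (eI r h3 true false true) ≠ 0 := fun h => eI_ne_one h3 (by simp) ((hw0 _).mp h)
  have pos100 : w' (eI r h3 true false false) ≠ 0 := fun h => eI_ne_one h3 (by simp) ((hw0 _).mp h)
  have d111110 : w' (eI r h3 true true true) ≠ w' (eI r h3 true true false) := fun h => by have hh := (hpe _ _).mpr h; rw [wv111, wv110] at hh; omega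
  have d111101 : w' (eI r h3 true true true) ≠ w' (eI r h3 true false true) := fun h => by have hh := (hpe _ _).mpr h; rw [wv111, wv101] at hh; omega
  have d111100 : w' (eI r h3 true true true) ≠ w' (eI r h3 true false false) := fun h => by have hh := (hpe _ _).mpr h; rw [wv111, wv100] at hh; omega
  have d110101 : w' (eI r h3 true true false) ≠ w' (eI r h3 true false true) := fun h => by have hh := (hpe _ _).mpr h; rw [wv110, wv101] at hh; omega
  have d110100 : w' (eI r h3 true true false) ≠ w' (eI r h3 true false false) := fun h => by have hh := (hpe _ _).mpr h; rw [wv110, wv100] at hh; omega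
  have d101100 : w' (eI r h3 true false true) ≠ w' (eI r h3 true false false) := fun h => by have hh := (hpe _ _).mpr h; rw [wv101, wv100] at hh; omega
  have hcls : ∀ g, w' g = 0 ∨ w' g = w' (eI r h3 true true true) ∨ w' g = w' (eI r h3 true true false) ∨
      w' g = w' (eI r h3 true false true) ∨ w' g = w' (eI r h3 true false false) := by
    intro g
    rcases wI_vals h3 g with h | h | h | h | h
    · exact Or.inl (by rw [(wI_zero_iff h3 g).mp h]; exact (hw0 1).mpr rfl)
    · exact Or.inr (Or.inl ((hpe g _).mp (by rw [h, wv111])))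
    · exact Or.inr (Or.inr (Or.inl ((hpe g _).mp (by rw [h, wv110]))))
    · exact Or.inr (Or.inr (Or.inr (Or.inl ((hpe g _).mp (by rw [h, wv101])))))
    · exact Or.inr (Or.inr (Or.inr (Or.inr ((hpe g _).mp (by rw [h, wv100])))))
  have t1 : w' (eI r h3 true false false) ≤ w' (eI r h3 true true true) + w' (eI r h3 false true true) := by have hh := hwtri (eI r h3 true true true) (eI r h3 false true true); rw [eI_mul] at hh; exact hh
  have t2 : w' (eI r h3 false false true) ≤ w' (eI r h3 true true true) + w' (eI r h3 true true false) := by have hh := hwtri (eI r h3 true true true) (eI r h3 true true false); rw [eI_mul] at hh; exact hh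
  have t3 : w' (eI r h3 false true false) ≤ w' (eI r h3 true true true) + w' (eI r h3 true false true) := by have hh := hwtri (eI r h3 true true true) (eI r h3 true false true); rw [eI_mul] at hh; exact hh
  have t4 : w' (eI r h3 true false true) ≤ w' (eI r h3 true true true) + w' (eI r h3 false true false) := by have hh := hwtri (eI r h3 true true true) (eI r h3 false true false); rw [eI_mul] at hh; exact hh
  have t5 : w' (eI r h3 false true true) ≤ w' (eI r h3 true true true) + w' (eI r h3 true false false) := by have hh := hwtri (eI r h3 true true true) (eI r h3 true false false); rw [eI_mul] at hh; exact hh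
  have t6 : w' (eI r h3 true true false) ≤ w' (eI r h3 true true true) + w' (eI r h3 false false true) := by have hh := hwtri (eI r h3 true true true) (eI r h3 false false true); rw [eI_mul] at hh; exact hh
  have t7 : w' (eI r h3 true false true) ≤ w' (eI r h3 false true true) + w' (eI r h3 true true false) := by have hh := hwtri (eI r h3 false true true) (eI r h3 true true false); rw [eI_mul] at hh; exact hh
  have t8 : w' (eI r h3 true true false) ≤ w' (eI r h3 false true true) + w' (eI r h3 true false true) := by have hh := hwtri (eI r h3 false true true) (eI r h3 true false true); rw [eI_mul] at hh; exact hh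
  have t9 : w' (eI r h3 false false true) ≤ w' (eI r h3 false true true) + w' (eI r h3 false true false) := by have hh := hwtri (eI r h3 false true true) (eI r h3 false true false); rw [eI_mul] at hh; exact hh
  have t10 : w' (eI r h3 true true true) ≤ w' (eI r h3 false true true) + w' (eI r h3 true false false) := by have hh := hwtri (eI r h3 false true true) (eI r h3 true false false); rw [eI_mul] at hh; exact hh
  have t11 : w' (eI r h3 false true false) ≤ w' (eI r h3 false true true) + w' (eI r h3 false false true) := by have hh := hwtri (eI r h3 false true true) (eI r h3 false false true); rw [eI_mul] at hh; exact hh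
  have t12 : w' (eI r h3 false true true) ≤ w' (eI r h3 true true false) + w' (eI r h3 true false true) := by have hh := hwtri (eI r h3 true true false) (eI r h3 true false true); rw [eI_mul] at hh; exact hh
  have t13 : w' (eI r h3 true false false) ≤ w' (eI r h3 true true false) + w' (eI r h3 false true false) := by have hh := hwtri (eI r h3 true true false) (eI r h3 false true false); rw [eI_mul] at hh; exact hh
  have t14 : w' (eI r h3 false true false) ≤ w' (eI r h3 true true false) + w' (eI r h3 true false false) := by have hh := hwtri (eI r h3 true true false) (eI r h3 true false false); rw [eI_mul] at hh; exact hh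
  have t15 : w' (eI r h3 true true true) ≤ w' (eI r h3 true true false) + w' (eI r h3 false false true) := by have hh := hwtri (eI r h3 true true false) (eI r h3 false false true); rw [eI_mul] at hh; exact hh
  have t16 : w' (eI r h3 true true true) ≤ w' (eI r h3 true false true) + w' (eI r h3 false true false) := by have hh := hwtri (eI r h3 true false true) (eI r h3 false true false); rw [eI_mul] at hh; exact hh
  have t17 : w' (eI r h3 false false true) ≤ w' (eI r h3 true false true) + w' (eI r h3 true false false) := by have hh := hwtri (eI r h3 true false true) (eI r h3 true false false); rw [eI_mul] at hh; exact hh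
  have t18 : w' (eI r h3 true false false) ≤ w' (eI r h3 true false true) + w' (eI r h3 false false true) := by have hh := hwtri (eI r h3 true false true) (eI r h3 false false true); rw [eI_mul] at hh; exact hh
  have t19 : w' (eI r h3 true true false) ≤ w' (eI r h3 false true false) + w' (eI r h3 true false false) := by have hh := hwtri (eI r h3 false true false) (eI r h3 true false false); rw [eI_mul] at hh; exact hh
  have t20 : w' (eI r h3 false true true) ≤ w' (eI r h3 false true false) + w' (eI r h3 false false true) := by have hh := hwtri (eI r h3 false true false) (eI r h3 false false true); rw [eI_mul] at hh; exact hh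
  have t21 : w' (eI r h3 true false true) ≤ w' (eI r h3 true false false) + w' (eI r h3 false false true) := by have hh := hwtri (eI r h3 true false false) (eI r h3 false false true); rw [eI_mul] at hh; exact hh
  have hmax : 4 ≤ w' (eI r h3 true true true) ∨ 4 ≤ w' (eI r h3 true true false) ∨ 4 ≤ w' (eI r h3 true false true) ∨ 4 ≤ w' (eI r h3 true false false) := by omega
  obtain ⟨g0, hg0⟩ : ∃ g, 4 ≤ w' g := by
    rcases hmax with h | h | h | h
    exacts [⟨_, h⟩, ⟨_, h⟩, ⟨_, h⟩, ⟨_, h⟩]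
  obtain ⟨g1, hgm1⟩ := hgl g0 1 (by omega)
  have mem1 := hcls g1
  rw [hgm1] at mem1
  obtain ⟨g2, hgm2⟩ := hgl g0 2 (by omega)
  have mem2 := hcls g2
  rw [hgm2] at mem2
  obtain ⟨g3, hgm3⟩ := hgl g0 3 (by omega)
  have mem3 := hcls g3
  rw [hgm3] at mem3
  obtain ⟨g4, hgm4⟩ := hgl g0 4 (by omega)
  have mem4 := hcls g4
  rw [hgm4] at mem4
  omega

private def eII (r : ℕ) (h2 : 2 ≤ r) (b0 b1 : Bool) : Fin r → Multiplicative (ZMod 2) :=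
  fun i =>
    if i = ⟨0, by omega⟩ then (if b0 then Multiplicative.ofAdd 1 else 1)
    else if i = ⟨1, by omega⟩ then (if b1 then Multiplicative.ofAdd 1 else 1)
    else 1

private lemma eII_app0 {r : ℕ} (h2 : 2 ≤ r) (b0 b1 : Bool) :
    eII r h2 b0 b1 ⟨0, by omega⟩ = (if b0 then Multiplicative.ofAdd 1 else 1) := by
  simp [eII]

private lemma eII_app1 {r : ℕ} (h2 : 2 ≤ r) (b0 b1 : Bool) :
    eII r h2 b0 b1 ⟨1, by omega⟩ = (if b1 then Multiplicative.ofAdd 1 else 1) := by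
  simp [eII, Fin.mk.injEq]

private lemma eII_ne_one {r : ℕ} (h2 : 2 ≤ r) {b0 b1 : Bool}
    (hb : b0 = true ∨ b1 = true) : eII r h2 b0 b1 ≠ 1 := by
  intro h
  rcases hb with hb | hb
  · have := congrFun h ⟨0, by omega⟩
    rw [eII_app0, hb] at this
    simp at this
  · have := congrFun h ⟨1, by omega⟩
    rw [eII_app1, hb] at this
    simp at this

private lemma eII_mul {r : ℕ} (h2 : 2 ≤ r) (b0 b1 c0 c1 : Bool) :
    eII r h2 b0 b1 * eII r h2 c0 c1 = eII r h2 (xor b0 c0) (xor b1 c1) := by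
  funext i
  simp only [Pi.mul_apply, eII]
  by_cases h0 : i = (⟨0, by omega⟩ : Fin r)
  · simp only [if_pos h0]; exact mz_mul b0 c0
  · by_cases h1 : i = (⟨1, by omega⟩ : Fin r)
    · simp only [if_neg h0, if_pos h1]; exact mz_mul b1 c1
    · simp only [if_neg h0, if_neg h1, one_mul]

open Classical in
private noncomputable def wII (G : Type*) [Group G] (r : ℕ) (h2 : 2 ≤ r)
    (p : G × (Fin r → Multiplicative (ZMod 2))) : ℕ :=
  if p = 1 then 0
  else if p.1 = 1 then
    if p.2 ⟨0, by omega⟩ = 1 then (if p.2 ⟨1, by omega⟩ = 1 then 4 else 7)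
    else (if p.2 ⟨1, by omega⟩ = 1 then 6 else 4)
  else
    if p.2 ⟨0, by omega⟩ = 1 then (if p.2 ⟨1, by omega⟩ = 1 then 7 else 6)
    else (if p.2 ⟨1, by omega⟩ = 1 then 5 else 4)

private def tblP : Bool → Bool → ℕ
  | true, true => 4
  | true, false => 6
  | false, true => 7
  | false, false => 4

private def tblQ : Bool → Bool → ℕ
  | true, true => 4
  | true, false => 5
  | false, true => 6
  | false, false => 7

private lemma wII_P {G : Type*} [Group G] {r : ℕ} (h2 : 2 ≤ r) {b0 b1 : Bool}
    (hb : b0 = true ∨ b1 = true) :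
    wII G r h2 ((1 : G), eII r h2 b0 b1) = tblP b0 b1 := by
  have hne : ((1 : G), eII r h2 b0 b1) ≠ 1 :=
    fun h => eII_ne_one h2 hb (Prod.mk_eq_one.mp h).2
  simp only [wII]
  rw [if_neg hne]
  cases b0 <;> cases b1 <;> simp [eII_app0, eII_app1, mzA, tblP]

private lemma wII_Q {G : Type*} [Group G] {r : ℕ} (h2 : 2 ≤ r) {g : G} (hg : g ≠ 1)
    (b0 b1 : Bool) :
    wII G r h2 (g, eII r h2 b0 b1) = tblQ b0 b1 := by
  have hne : (g, eII r h2 b0 b1) ≠ 1 := fun h => hg (Prod.mk_eq_one.mp h).1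
  simp only [wII]
  rw [if_neg hne]
  cases b0 <;> cases b1 <;> simp [hg, eII_app0, eII_app1, mzA, tblQ]

private lemma wII_zero_iff {G : Type*} [Group G] {r : ℕ} (h2 : 2 ≤ r)
    (p : G × (Fin r → Multiplicative (ZMod 2))) : wII G r h2 p = 0 ↔ p = 1 := by
  constructor
  · intro h0
    by_contra hx
    simp only [wII, if_neg hx] at h0
    split_ifs at h0 <;> omega
  · intro h; subst h; simp [wII]

private lemma wII_range {G : Type*} [Group G] {r : ℕ} (h2 : 2 ≤ r)
    (p : G × (Fin r → Multiplicative (ZMod 2))) :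
    wII G r h2 p = 0 ∨ (4 ≤ wII G r h2 p ∧ wII G r h2 p ≤ 7) := by
  simp only [wII]; split_ifs <;> omega

private lemma wII_vals {G : Type*} [Group G] {r : ℕ} (h2 : 2 ≤ r)
    (p : G × (Fin r → Multiplicative (ZMod 2))) :
    wII G r h2 p = 0 ∨ wII G r h2 p = 4 ∨ wII G r h2 p = 5 ∨ wII G r h2 p = 6 ∨
      wII G r h2 p = 7 := by
  simp only [wII]; split_ifs <;> omega

private lemma caseII (G : Type*) [Group G] (hG : Nontrivial G) (r : ℕ) (h2 : 2 ≤ r) :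
    HasNonPIntervalWeight (G × (Fin r → Multiplicative (ZMod 2))) := by
  obtain ⟨g0, hg0⟩ := exists_ne (1 : G)
  have hg0' : g0⁻¹ ≠ 1 := fun h => hg0 (inv_eq_one.mp h)
  refine ⟨wII G r h2, ⟨wII_zero_iff h2, ?_, ?_⟩, ?_⟩
  · intro p
    have hsnd : ∀ i, (p⁻¹).2 i = p.2 i := fun i => mzInv (p.2 i)
    simp only [wII, Prod.fst_inv, hsnd]
    by_cases hp : p = 1
    · simp [hp]
    · rw [if_neg hp, if_neg (fun h => hp (inv_eq_one.mp h))]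
      by_cases h1 : p.1 = 1
      · rw [if_pos h1, if_pos (inv_eq_one.mpr h1)]
      · rw [if_neg h1, if_neg (fun h => h1 (inv_eq_one.mp h))]
  · intro x y
    by_cases hx : x = 1
    · subst hx; rw [one_mul]
      have h1 : wII G r h2 1 = 0 := (wII_zero_iff h2 1).mpr rfl
      omega
    by_cases hy : y = 1
    · subst hy; rw [mul_one]
      have h1 : wII G r h2 1 = 0 := (wII_zero_iff h2 1).mpr rfl
      omega
    have hx0 : wII G r h2 x ≠ 0 := fun h => hx ((wII_zero_iff h2 x).mp h)
    have hy0 : wII G r h2 y ≠ 0 := fun h => hy ((wII_zero_iff h2 y).mp h)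
    have r1 := wII_range h2 x
    have r2 := wII_range h2 y
    have r3 := wII_range h2 (x * y)
    omega
  intro w' hw' hpe hgl
  obtain ⟨hw0, hwinv, hwtri⟩ := hw'

  have wvP11 : wII G r h2 ((1 : G), eII r h2 true true) = 4 := by rw [wII_P h2 (by simp)]; rfl
  have wvP10 : wII G r h2 ((1 : G), eII r h2 true false) = 6 := by rw [wII_P h2 (by simp)]; rfl
  have wvP01 : wII G r h2 ((1 : G), eII r h2 false true) = 7 := by rw [wII_P h2 (by simp)]; rfl
  have wvQ11 : wII G r h2 (g0, eII r h2 true true) = 4 := by rw [wII_Q h2 hg0]; rfl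
  have wvQi11 : wII G r h2 (g0⁻¹, eII r h2 true true) = 4 := by rw [wII_Q h2 hg0']; rfl
  have wvQ10 : wII G r h2 (g0, eII r h2 true false) = 5 := by rw [wII_Q h2 hg0]; rfl
  have wvQi10 : wII G r h2 (g0⁻¹, eII r h2 true false) = 5 := by rw [wII_Q h2 hg0']; rfl
  have wvQ01 : wII G r h2 (g0, eII r h2 false true) = 6 := by rw [wII_Q h2 hg0]; rfl
  have wvQi01 : wII G r h2 (g0⁻¹, eII r h2 false true) = 6 := by rw [wII_Q h2 hg0']; rfl
  have wvQ00 : wII G r h2 (g0, eII r h2 false false) = 7 := by rw [wII_Q h2 hg0]; rfl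
  have wvQi00 : wII G r h2 (g0⁻¹, eII r h2 false false) = 7 := by rw [wII_Q h2 hg0']; rfl
  have qi11 : w' (g0⁻¹, eII r h2 true true) = w' (g0, eII r h2 true true) := (hpe _ _).mp (by rw [wvQi11, wvQ11])
  have qi10 : w' (g0⁻¹, eII r h2 true false) = w' (g0, eII r h2 true false) := (hpe _ _).mp (by rw [wvQi10, wvQ10])
  have qi01 : w' (g0⁻¹, eII r h2 false true) = w' (g0, eII r h2 false true) := (hpe _ _).mp (by rw [wvQi01, wvQ01])
  have qi00 : w' (g0⁻¹, eII r h2 false false) = w' (g0, eII r h2 false false) := (hpe _ _).mp (by rw [wvQi00, wvQ00])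
  have bp11 : w' ((1 : G), eII r h2 true true) = w' (g0, eII r h2 true true) := (hpe _ _).mp (by rw [wvP11, wvQ11])
  have bp10 : w' ((1 : G), eII r h2 true false) = w' (g0, eII r h2 false true) := (hpe _ _).mp (by rw [wvP10, wvQ01])
  have bp01 : w' ((1 : G), eII r h2 false true) = w' (g0, eII r h2 false false) := (hpe _ _).mp (by rw [wvP01, wvQ00])
  have pos11 : w' (g0, eII r h2 true true) ≠ 0 := fun h => hg0 (Prod.mk_eq_one.mp ((hw0 _).mp h)).1
  have pos10 : w' (g0, eII r h2 true false) ≠ 0 := fun h => hg0 (Prod.mk_eq_one.mp ((hw0 _).mp h)).1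
  have pos01 : w' (g0, eII r h2 false true) ≠ 0 := fun h => hg0 (Prod.mk_eq_one.mp ((hw0 _).mp h)).1
  have pos00 : w' (g0, eII r h2 false false) ≠ 0 := fun h => hg0 (Prod.mk_eq_one.mp ((hw0 _).mp h)).1
  have d1110 : w' (g0, eII r h2 true true) ≠ w' (g0, eII r h2 true false) := fun h => by have hh := (hpe _ _).mpr h; rw [wvQ11, wvQ10] at hh; omega
  have d1101 : w' (g0, eII r h2 true true) ≠ w' (g0, eII r h2 false true) := fun h => by have hh := (hpe _ _).mpr h; rw [wvQ11, wvQ01] at hh; omega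
  have d1100 : w' (g0, eII r h2 true true) ≠ w' (g0, eII r h2 false false) := fun h => by have hh := (hpe _ _).mpr h; rw [wvQ11, wvQ00] at hh; omega
  have d1001 : w' (g0, eII r h2 true false) ≠ w' (g0, eII r h2 false true) := fun h => by have hh := (hpe _ _).mpr h; rw [wvQ10, wvQ01] at hh; omega
  have d1000 : w' (g0, eII r h2 true false) ≠ w' (g0, eII r h2 false false) := fun h => by have hh := (hpe _ _).mpr h; rw [wvQ10, wvQ00] at hh; omega
  have d0100 : w' (g0, eII r h2 false true) ≠ w' (g0, eII r h2 false false) := fun h => by have hh := (hpe _ _).mpr h; rw [wvQ01, wvQ00] at hh; omega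
  have hcls : ∀ g, w' g = 0 ∨ w' g = w' (g0, eII r h2 true true) ∨ w' g = w' (g0, eII r h2 true false) ∨
      w' g = w' (g0, eII r h2 false true) ∨ w' g = w' (g0, eII r h2 false false) := by
    intro g
    rcases wII_vals h2 g with h | h | h | h | h
    · exact Or.inl (by rw [(wII_zero_iff h2 g).mp h]; exact (hw0 1).mpr rfl)
    · exact Or.inr (Or.inl ((hpe g _).mp (by rw [h, wvQ11])))
    · exact Or.inr (Or.inr (Or.inl ((hpe g _).mp (by rw [h, wvQ10]))))
    · exact Or.inr (Or.inr (Or.inr (Or.inl ((hpe g _).mp (by rw [h, wvQ01])))))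
    · exact Or.inr (Or.inr (Or.inr (Or.inr ((hpe g _).mp (by rw [h, wvQ00])))))
  have t1 : w' ((1 : G), eII r h2 false true) ≤ w' ((1 : G), eII r h2 true true) + w' ((1 : G), eII r h2 true false) := by have hh := hwtri ((1 : G), eII r h2 true true) ((1 : G), eII r h2 true false); rw [Prod.mk_mul_mk, one_mul, eII_mul] at hh; exact hh
  have t2 : w' ((1 : G), eII r h2 true false) ≤ w' ((1 : G), eII r h2 true true) + w' ((1 : G), eII r h2 false true) := by have hh := hwtri ((1 : G), eII r h2 true true) ((1 : G), eII r h2 false true); rw [Prod.mk_mul_mk, one_mul, eII_mul] at hh; exact hh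
  have t3 : w' ((1 : G), eII r h2 true true) ≤ w' ((1 : G), eII r h2 true false) + w' ((1 : G), eII r h2 false true) := by have hh := hwtri ((1 : G), eII r h2 true false) ((1 : G), eII r h2 false true); rw [Prod.mk_mul_mk, one_mul, eII_mul] at hh; exact hh
  have t4 : w' (g0, eII r h2 false false) ≤ w' ((1 : G), eII r h2 true true) + w' (g0, eII r h2 true true) := by have hh := hwtri ((1 : G), eII r h2 true true) (g0, eII r h2 true true); rw [Prod.mk_mul_mk, one_mul, eII_mul] at hh; exact hh
  have t5 : w' (g0, eII r h2 false true) ≤ w' ((1 : G), eII r h2 true true) + w' (g0, eII r h2 true false) := by have hh := hwtri ((1 : G), eII r h2 true true) (g0, eII r h2 true false); rw [Prod.mk_mul_mk, one_mul, eII_mul] at hh; exact hh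
  have t6 : w' (g0, eII r h2 true false) ≤ w' ((1 : G), eII r h2 true true) + w' (g0, eII r h2 false true) := by have hh := hwtri ((1 : G), eII r h2 true true) (g0, eII r h2 false true); rw [Prod.mk_mul_mk, one_mul, eII_mul] at hh; exact hh
  have t7 : w' (g0, eII r h2 true true) ≤ w' ((1 : G), eII r h2 true true) + w' (g0, eII r h2 false false) := by have hh := hwtri ((1 : G), eII r h2 true true) (g0, eII r h2 false false); rw [Prod.mk_mul_mk, one_mul, eII_mul] at hh; exact hh
  have t8 : w' (g0, eII r h2 false true) ≤ w' ((1 : G), eII r h2 true false) + w' (g0, eII r h2 true true) := by have hh := hwtri ((1 : G), eII r h2 true false) (g0, eII r h2 true true); rw [Prod.mk_mul_mk, one_mul, eII_mul] at hh; exact hh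
  have t9 : w' (g0, eII r h2 false false) ≤ w' ((1 : G), eII r h2 true false) + w' (g0, eII r h2 true false) := by have hh := hwtri ((1 : G), eII r h2 true false) (g0, eII r h2 true false); rw [Prod.mk_mul_mk, one_mul, eII_mul] at hh; exact hh
  have t10 : w' (g0, eII r h2 true true) ≤ w' ((1 : G), eII r h2 true false) + w' (g0, eII r h2 false true) := by have hh := hwtri ((1 : G), eII r h2 true false) (g0, eII r h2 false true); rw [Prod.mk_mul_mk, one_mul, eII_mul] at hh; exact hh
  have t11 : w' (g0, eII r h2 true false) ≤ w' ((1 : G), eII r h2 true false) + w' (g0, eII r h2 false false) := by have hh := hwtri ((1 : G), eII r h2 true false) (g0, eII r h2 false false); rw [Prod.mk_mul_mk, one_mul, eII_mul] at hh; exact hh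
  have t12 : w' (g0, eII r h2 true false) ≤ w' ((1 : G), eII r h2 false true) + w' (g0, eII r h2 true true) := by have hh := hwtri ((1 : G), eII r h2 false true) (g0, eII r h2 true true); rw [Prod.mk_mul_mk, one_mul, eII_mul] at hh; exact hh
  have t13 : w' (g0, eII r h2 true true) ≤ w' ((1 : G), eII r h2 false true) + w' (g0, eII r h2 true false) := by have hh := hwtri ((1 : G), eII r h2 false true) (g0, eII r h2 true false); rw [Prod.mk_mul_mk, one_mul, eII_mul] at hh; exact hh
  have t14 : w' (g0, eII r h2 false false) ≤ w' ((1 : G), eII r h2 false true) + w' (g0, eII r h2 false true) := by have hh := hwtri ((1 : G), eII r h2 false true) (g0, eII r h2 false true); rw [Prod.mk_mul_mk, one_mul, eII_mul] at hh; exact hh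
  have t15 : w' (g0, eII r h2 false true) ≤ w' ((1 : G), eII r h2 false true) + w' (g0, eII r h2 false false) := by have hh := hwtri ((1 : G), eII r h2 false true) (g0, eII r h2 false false); rw [Prod.mk_mul_mk, one_mul, eII_mul] at hh; exact hh
  have t16 : w' ((1 : G), eII r h2 false true) ≤ w' (g0, eII r h2 true true) + w' (g0⁻¹, eII r h2 true false) := by have hh := hwtri (g0, eII r h2 true true) (g0⁻¹, eII r h2 true false); rw [Prod.mk_mul_mk, mul_inv_cancel, eII_mul] at hh; exact hh
  have t17 : w' ((1 : G), eII r h2 true false) ≤ w' (g0, eII r h2 true true) + w' (g0⁻¹, eII r h2 false true) := by have hh := hwtri (g0, eII r h2 true true) (g0⁻¹, eII r h2 false true); rw [Prod.mk_mul_mk, mul_inv_cancel, eII_mul] at hh; exact hh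
  have t18 : w' ((1 : G), eII r h2 true true) ≤ w' (g0, eII r h2 true true) + w' (g0⁻¹, eII r h2 false false) := by have hh := hwtri (g0, eII r h2 true true) (g0⁻¹, eII r h2 false false); rw [Prod.mk_mul_mk, mul_inv_cancel, eII_mul] at hh; exact hh
  have t19 : w' ((1 : G), eII r h2 true true) ≤ w' (g0, eII r h2 true false) + w' (g0⁻¹, eII r h2 false true) := by have hh := hwtri (g0, eII r h2 true false) (g0⁻¹, eII r h2 false true); rw [Prod.mk_mul_mk, mul_inv_cancel, eII_mul] at hh; exact hh
  have t20 : w' ((1 : G), eII r h2 true false) ≤ w' (g0, eII r h2 true false) + w' (g0⁻¹, eII r h2 false false) := by have hh := hwtri (g0, eII r h2 true false) (g0⁻¹, eII r h2 false false); rw [Prod.mk_mul_mk, mul_inv_cancel, eII_mul] at hh; exact hh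
  have t21 : w' ((1 : G), eII r h2 false true) ≤ w' (g0, eII r h2 false true) + w' (g0⁻¹, eII r h2 false false) := by have hh := hwtri (g0, eII r h2 false true) (g0⁻¹, eII r h2 false false); rw [Prod.mk_mul_mk, mul_inv_cancel, eII_mul] at hh; exact hh
  have hmax : 4 ≤ w' (g0, eII r h2 true true) ∨ 4 ≤ w' (g0, eII r h2 true false) ∨ 4 ≤ w' (g0, eII r h2 false true) ∨ 4 ≤ w' (g0, eII r h2 false false) := by omega
  obtain ⟨gm0, hgm0⟩ : ∃ g, 4 ≤ w' g := by
    rcases hmax with h | h | h | h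
    exacts [⟨_, h⟩, ⟨_, h⟩, ⟨_, h⟩, ⟨_, h⟩]
  obtain ⟨g1, hgm1⟩ := hgl gm0 1 (by omega)
  have mem1 := hcls g1
  rw [hgm1] at mem1
  obtain ⟨g2, hgm2⟩ := hgl gm0 2 (by omega)
  have mem2 := hcls g2
  rw [hgm2] at mem2
  obtain ⟨g3, hgm3⟩ := hgl gm0 3 (by omega)
  have mem3 := hcls g3
  rw [hgm3] at mem3
  obtain ⟨g4, hgm4⟩ := hgl gm0 4 (by omega)
  have mem4 := hcls g4
  rw [hgm4] at mem4
  omega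

theorem elementary_abelian_products_non_pinterval :
    (∀ r : ℕ, 3 ≤ r →
      HasNonPIntervalWeight (Fin r → Multiplicative (ZMod 2))) ∧
    (∀ (G : Type*) [Group G] [Finite G], Nontrivial G → ∀ r : ℕ, 2 ≤ r →
      HasNonPIntervalWeight (G × (Fin r → Multiplicative (ZMod 2)))) := by
  exact ⟨caseI, fun G _ _ hG r h2 => caseII G hG r h2⟩
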